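/- arXiv:1201.3463 — 2 statements merged into one kernel-verified Lean document; each statement's English description precedes it below -/
import Mathlib

section
/- Let w = (w1, w2) ∈ ℕ₊² and let d1, d2 be positive multiples of w2 with d1 < d2 and d1 | d2. Then the polynomial map F = T2 ∘ T1, where T1(x,y) = (x + y^{d1/w2}, y) and T2(x,y) = (x, y + x^{d2/d1}), is a polynomial automorphism of ℂ² with weighted bidegree (deg_w F1, deg_w F2) = (d1, d2), provided d1 ≥ w1. -/
open MvPolynomial

/-- A polynomial map of ℂ², given by its two component polynomials. -/
abbrev PolyMap : Type := MvPolynomial (Fin 2) ℂ × MvPolynomial (Fin 2) ℂ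

/-- Composition of polynomial maps: (F ∘ G). -/
noncomputable def pcomp (F G : PolyMap) : PolyMap :=
  (MvPolynomial.aeval ![G.1, G.2] F.1, MvPolynomial.aeval ![G.1, G.2] F.2)

/-- `F` is a polynomial automorphism of ℂ²: it has a polynomial inverse. -/
def IsPolyAut (F : PolyMap) : Prop :=
  ∃ G : PolyMap, pcomp F G = (MvPolynomial.X 0, MvPolynomial.X 1) ∧
    pcomp G F = (MvPolynomial.X 0, MvPolynomial.X 1)

/-- Weighted degree with `wdeg x = w1`, `wdeg y = w2` (0 on the zero polynomial). -/
noncomputable def wdeg (w1 w2 : ℕ) (p : MvPolynomial (Fin 2) ℂ) : ℕ :=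
  p.support.sup fun α => α 0 * w1 + α 1 * w2

/-- An affine automorphism: an automorphism both of whose components have total degree 1. -/
def IsAffineAut (F : PolyMap) : Prop :=
  IsPolyAut F ∧ F.1.totalDegree = 1 ∧ F.2.totalDegree = 1

/-- The triangular map (x, y) ↦ (x, y + f(x)). -/
noncomputable def lowerT (f : Polynomial ℂ) : PolyMap :=
  (MvPolynomial.X 0,
   MvPolynomial.X 1 + Polynomial.aeval (MvPolynomial.X 0 : MvPolynomial (Fin 2) ℂ) f)

/-- The triangular map (x, y) ↦ (x + f(y), y). -/
noncomputable def upperT (f : Polynomial ℂ) : PolyMap :=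
  (MvPolynomial.X 0 + Polynomial.aeval (MvPolynomial.X 1 : MvPolynomial (Fin 2) ℂ) f,
   MvPolynomial.X 1)

/-- `chain L1 f l = T_l ∘ ⋯ ∘ T_1 ∘ L1`, where `T_i = lowerT (f i)` for odd `i`
and `T_i = upperT (f i)` for even `i`. -/
noncomputable def chain (L1 : PolyMap) (f : ℕ → Polynomial ℂ) : ℕ → PolyMap
  | 0 => L1
  | i + 1 => pcomp (if i % 2 = 0 then lowerT (f (i + 1)) else upperT (f (i + 1))) (chain L1 f i)


section Aux

open Finsupp

variable {w1 w2 : ℕ} {p q : MvPolynomial (Fin 2) ℂ}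

lemma wdeg_le {n : ℕ} (h : ∀ α ∈ p.support, α 0 * w1 + α 1 * w2 ≤ n) :
    wdeg w1 w2 p ≤ n := Finset.sup_le h

lemma le_wdeg' {α : Fin 2 →₀ ℕ} (h : α ∈ p.support) :
    α 0 * w1 + α 1 * w2 ≤ wdeg w1 w2 p :=
  Finset.le_sup (f := fun α => α 0 * w1 + α 1 * w2) h

lemma le_wdeg {α : Fin 2 →₀ ℕ} (h : coeff α p ≠ 0) :
    α 0 * w1 + α 1 * w2 ≤ wdeg w1 w2 p :=
  le_wdeg' (MvPolynomial.mem_support_iff.2 h)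

lemma wdeg_add_le : wdeg w1 w2 (p + q) ≤ max (wdeg w1 w2 p) (wdeg w1 w2 q) := by
  apply wdeg_le
  intro α hα
  rcases Finset.mem_union.1 (MvPolynomial.support_add hα) with h | h
  · exact le_max_of_le_left (le_wdeg' h)
  · exact le_max_of_le_right (le_wdeg' h)

lemma wdeg_mul_le : wdeg w1 w2 (p * q) ≤ wdeg w1 w2 p + wdeg w1 w2 q := by
  apply wdeg_le
  intro α hα
  obtain ⟨β, hβ, γ, hγ, rfl⟩ := Finset.mem_add.1 (MvPolynomial.support_mul p q hα)
  have : (β + γ) 0 * w1 + (β + γ) 1 * w2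
      = (β 0 * w1 + β 1 * w2) + (γ 0 * w1 + γ 1 * w2) := by
    simp [Finsupp.add_apply]; ring
  rw [this]
  exact add_le_add (le_wdeg' hβ) (le_wdeg' hγ)

lemma wdeg_one : wdeg w1 w2 (1 : MvPolynomial (Fin 2) ℂ) = 0 := by
  have : (1 : MvPolynomial (Fin 2) ℂ) = X 0 ^ 0 := by simp
  rw [this]
  unfold wdeg
  rw [MvPolynomial.support_X_pow, Finset.sup_singleton]
  simp

lemma wdeg_pow_le (n : ℕ) : wdeg w1 w2 (p ^ n) ≤ n * wdeg w1 w2 p := by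
  induction n with
  | zero => simp [pow_zero, wdeg_one]
  | succ n ih =>
      calc wdeg w1 w2 (p ^ (n+1)) ≤ wdeg w1 w2 (p ^ n) + wdeg w1 w2 p := by
              rw [pow_succ]; exact wdeg_mul_le
        _ ≤ n * wdeg w1 w2 p + wdeg w1 w2 p := by gcongr
        _ = (n+1) * wdeg w1 w2 p := by ring

lemma wdeg_X_pow (i : Fin 2) (n : ℕ) :
    wdeg w1 w2 (X i ^ n) = n * (if i = 0 then w1 else w2) := by
  unfold wdeg
  rw [MvPolynomial.support_X_pow, Finset.sup_singleton]
  fin_cases i <;> simp [Finsupp.single_apply]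

lemma coeff_top (a b : ℕ) :
    coeff (Finsupp.single 1 (a * b)) (((X 0 + X 1 ^ a) : MvPolynomial (Fin 2) ℂ) ^ b) = 1 := by
  rw [add_pow, MvPolynomial.coeff_sum]
  rw [Finset.sum_eq_single 0]
  · rw [pow_zero, one_mul, Nat.choose_zero_right, Nat.cast_one, mul_one, Nat.sub_zero,
      ← pow_mul, X_pow_eq_monomial, coeff_monomial, if_pos rfl]
  · intro k hk hk0
    have : (X 0 : MvPolynomial (Fin 2) ℂ) ^ k * (X 1 ^ a) ^ (b - k)
          * (b.choose k : MvPolynomial (Fin 2) ℂ) =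
        monomial (Finsupp.single 0 k + Finsupp.single 1 (a * (b - k))) (b.choose k : ℂ) := by
      rw [← pow_mul, X_pow_eq_monomial (n := (0 : Fin 2)), X_pow_eq_monomial, monomial_mul,
        one_mul]
      rw [show ((b.choose k : ℕ) : MvPolynomial (Fin 2) ℂ) = C (b.choose k : ℂ) by
        simp [MvPolynomial.C_eq_coe_nat]]
      rw [mul_comm, MvPolynomial.C_mul_monomial, mul_one]
    rw [this, coeff_monomial, if_neg]
    intro h
    apply hk0
    have := DFunLike.congr_fun h 0
    simpa [Finsupp.single_apply] using this
  · intro h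
    simp at h

lemma F_eq (a b : ℕ) :
    pcomp (lowerT (Polynomial.X ^ b)) (upperT (Polynomial.X ^ a)) =
      (X 0 + X 1 ^ a, X 1 + (X 0 + X 1 ^ a) ^ b) := by
  simp [pcomp, lowerT, upperT, map_add, map_pow]

end Aux

/-- For `d1, d2` positive multiples of `w2` with `w1 ≤ d1`, `d1 < d2` and `d1 ∣ d2`, the map
`F = T2 ∘ T1` with `T1(x,y) = (x + y^{d1/w2}, y)`, `T2(x,y) = (x, y + x^{d2/d1})` is an
automorphism of weighted bidegree `(d1, d2)`. -/
theorem stmt_10 (w1 w2 : ℕ) (hw1 : 0 < w1) (hw2 : 0 < w2) (d1 d2 : ℕ)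
    (h1 : w2 ∣ d1) (h1' : 0 < d1) (h2 : w2 ∣ d2) (h2' : 0 < d2)
    (hlt : d1 < d2) (hdvd : d1 ∣ d2) (hge : w1 ≤ d1) :
    IsPolyAut (pcomp (lowerT (Polynomial.X ^ (d2 / d1))) (upperT (Polynomial.X ^ (d1 / w2)))) ∧
    wdeg w1 w2 (pcomp (lowerT (Polynomial.X ^ (d2 / d1)))
      (upperT (Polynomial.X ^ (d1 / w2)))).1 = d1 ∧
    wdeg w1 w2 (pcomp (lowerT (Polynomial.X ^ (d2 / d1)))
      (upperT (Polynomial.X ^ (d1 / w2)))).2 = d2 := by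
  set a := d1 / w2 with ha_def
  set b := d2 / d1 with hb_def
  have haw : a * w2 = d1 := Nat.div_mul_cancel h1
  have hbd : b * d1 = d2 := Nat.div_mul_cancel hdvd
  have hw2d1 : w2 ≤ d1 := Nat.le_of_dvd h1' h1
  have habw : a * b * w2 = d2 := by
    rw [mul_comm a b, mul_assoc, haw, hbd]
  have hab1 : a * b ≠ 1 := by
    intro h
    rw [h, one_mul] at habw
    omega
  rw [F_eq]
  refine ⟨?_, ?_, ?_⟩
  · refine ⟨(X 0 - (X 1 - X 0 ^ b) ^ a, X 1 - X 0 ^ b), ?_, ?_⟩ <;>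
    · simp only [pcomp, map_add, map_pow, map_sub, aeval_X, Matrix.cons_val_zero,
        Matrix.cons_val_one, Matrix.head_cons]
      rw [Prod.mk.injEq]
      constructor <;> ring
  · apply le_antisymm
    · calc wdeg w1 w2 ((X 0 + X 1 ^ a : MvPolynomial (Fin 2) ℂ))
          ≤ max (wdeg w1 w2 (X 0 : MvPolynomial (Fin 2) ℂ))
              (wdeg w1 w2 ((X 1 : MvPolynomial (Fin 2) ℂ) ^ a)) := wdeg_add_le
        _ ≤ d1 := by
            apply max_le
            · have := wdeg_X_pow (w1 := w1) (w2 := w2) 0 1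
              simp at this
              rw [this]; exact hge
            · rw [wdeg_X_pow]; simp [haw]
    · have hc : coeff (Finsupp.single 1 a) ((X 0 + X 1 ^ a : MvPolynomial (Fin 2) ℂ)) ≠ 0 := by
        rw [coeff_add, X_pow_eq_monomial, coeff_monomial, if_pos rfl, coeff_X', if_neg]
        · simp
        · intro h
          have := DFunLike.congr_fun h 0
          simp [Finsupp.single_apply] at this
      have := le_wdeg (w1 := w1) (w2 := w2) hc
      simpa [Finsupp.single_apply, haw] using this
  · apply le_antisymm
    · calc wdeg w1 w2 ((X 1 + (X 0 + X 1 ^ a) ^ b : MvPolynomial (Fin 2) ℂ))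
          ≤ max (wdeg w1 w2 (X 1 : MvPolynomial (Fin 2) ℂ))
              (wdeg w1 w2 ((X 0 + X 1 ^ a : MvPolynomial (Fin 2) ℂ) ^ b)) := wdeg_add_le
        _ ≤ d2 := by
            apply max_le
            · have := wdeg_X_pow (w1 := w1) (w2 := w2) 1 1
              simp at this
              rw [this]; omega
            · calc wdeg w1 w2 ((X 0 + X 1 ^ a : MvPolynomial (Fin 2) ℂ) ^ b)
                  ≤ b * wdeg w1 w2 ((X 0 + X 1 ^ a : MvPolynomial (Fin 2) ℂ)) :=
                    wdeg_pow_le b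
                _ ≤ b * d1 := by
                    gcongr
                    calc wdeg w1 w2 ((X 0 + X 1 ^ a : MvPolynomial (Fin 2) ℂ))
                        ≤ max (wdeg w1 w2 (X 0 : MvPolynomial (Fin 2) ℂ))
                            (wdeg w1 w2 ((X 1 : MvPolynomial (Fin 2) ℂ) ^ a)) := wdeg_add_le
                      _ ≤ d1 := by
                          apply max_le
                          · have := wdeg_X_pow (w1 := w1) (w2 := w2) 0 1
                            simp at this
                            rw [this]; exact hge
                          · rw [wdeg_X_pow]; simp [haw]
                _ = d2 := hbd
    · have hc : coeff (Finsupp.single 1 (a * b))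
          ((X 1 + (X 0 + X 1 ^ a) ^ b : MvPolynomial (Fin 2) ℂ)) ≠ 0 := by
        rw [coeff_add, coeff_top, coeff_X', if_neg]
        · simp
        · intro h
          have := DFunLike.congr_fun h 1
          simp [Finsupp.single_apply] at this
          exact hab1 this.symm
      have := le_wdeg (w1 := w1) (w2 := w2) hc
      simpa [Finsupp.single_apply, habw] using this
end

section
/- Let w = (w1, w2) ∈ ℕ₊². If F is a polynomial automorphism of ℂ² of length at least 2, then deg_w F1 + deg_w F2 > w1 + w2. -/
open MvPolynomial

/-! ### Auxiliary machinery -/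

abbrev M2 : Type := MvPolynomial (Fin 2) ℂ

/-- The algebra map sending `x ↦ x·t^w1`, `y ↦ y·t^w2`; the `t`-degree of the image
computes the weighted degree. -/
noncomputable def Phi (w1 w2 : ℕ) : M2 →ₐ[ℂ] Polynomial M2 :=
  aeval ![Polynomial.C (X 0) * Polynomial.X ^ w1, Polynomial.C (X 1) * Polynomial.X ^ w2]

lemma Phi_monomial (w1 w2 : ℕ) (α : Fin 2 →₀ ℕ) (c : ℂ) :
    Phi w1 w2 (monomial α c)
      = Polynomial.C (monomial α c) * Polynomial.X ^ (α 0 * w1 + α 1 * w2) := by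
  rw [Phi, aeval_monomial, monomial_eq]
  rw [Finsupp.prod_fintype _ _ (fun i => pow_zero _),
      Finsupp.prod_fintype _ _ (fun i => pow_zero _)]
  simp only [Fin.prod_univ_two, Matrix.cons_val_zero, Matrix.cons_val_one, Matrix.head_cons,
    Polynomial.algebraMap_apply, algebraMap_eq, map_mul, map_pow]
  ring

lemma coeff_coeff_Phi (w1 w2 : ℕ) (p : M2) (k : ℕ) (d : Fin 2 →₀ ℕ) :
    MvPolynomial.coeff d ((Phi w1 w2 p).coeff k)
      = if d 0 * w1 + d 1 * w2 = k then MvPolynomial.coeff d p else 0 := by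
  conv_lhs => rw [p.as_sum, map_sum]
  rw [Polynomial.finset_sum_coeff, MvPolynomial.coeff_sum]
  have h1 : ∀ α ∈ p.support,
      MvPolynomial.coeff d ((Phi w1 w2 (monomial α (coeff α p))).coeff k)
      = if α = d then (if d 0 * w1 + d 1 * w2 = k then coeff d p else 0) else 0 := by
    intro α hα
    rw [Phi_monomial, Polynomial.coeff_C_mul, Polynomial.coeff_X_pow]
    by_cases hαd : α = d
    · subst hαd
      by_cases hk : α 0 * w1 + α 1 * w2 = k
      · simp [hk, coeff_monomial]
      · simp [hk, Ne.symm hk, coeff_monomial]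
    · by_cases hk : k = α 0 * w1 + α 1 * w2 <;> simp [hk, coeff_monomial, hαd]
  rw [Finset.sum_congr rfl h1, Finset.sum_ite_eq' p.support d]
  by_cases hd : d ∈ p.support
  · simp [hd]
  · simp [hd, MvPolynomial.notMem_support_iff.mp hd]

lemma support_coeff_Phi {w1 w2 : ℕ} {p : M2} {k : ℕ} {d : Fin 2 →₀ ℕ}
    (h : MvPolynomial.coeff d ((Phi w1 w2 p).coeff k) ≠ 0) :
    d 0 * w1 + d 1 * w2 = k ∧ d ∈ p.support := by
  rw [coeff_coeff_Phi] at h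
  by_cases hk : d 0 * w1 + d 1 * w2 = k
  · refine ⟨hk, ?_⟩
    rw [mem_support_iff]
    simpa [hk] using h
  · simp [hk] at h

lemma wdeg_eq (w1 w2 : ℕ) (p : M2) : wdeg w1 w2 p = (Phi w1 w2 p).natDegree := by
  apply le_antisymm
  · apply Finset.sup_le
    intro α hα
    apply Polynomial.le_natDegree_of_ne_zero
    intro h
    have := coeff_coeff_Phi w1 w2 p (α 0 * w1 + α 1 * w2) α
    rw [h] at this
    simp only [if_pos rfl] at this
    exact (mem_support_iff.mp hα) this.symm
  · by_cases hp : Phi w1 w2 p = 0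
    · simp [hp]
    · have h := Polynomial.leadingCoeff_ne_zero.mpr hp
      rw [Polynomial.leadingCoeff] at h
      obtain ⟨d, hd⟩ := MvPolynomial.ne_zero_iff.mp h
      obtain ⟨h1, h2⟩ := support_coeff_Phi hd
      rw [← h1]
      exact Finset.le_sup (f := fun α : Fin 2 →₀ ℕ => α 0 * w1 + α 1 * w2) h2

lemma Phi_ne_zero {w1 w2 : ℕ} {p : M2} (hp : p ≠ 0) : Phi w1 w2 p ≠ 0 := by
  obtain ⟨d, hd⟩ := MvPolynomial.ne_zero_iff.mp hp
  intro h
  have := coeff_coeff_Phi w1 w2 p (d 0 * w1 + d 1 * w2) d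
  rw [h] at this
  simp only [Polynomial.coeff_zero, coeff_zero, if_pos rfl] at this
  exact hd this.symm

lemma ne_zero_of_one_le_ND {w1 w2 : ℕ} {p : M2} (h : 1 ≤ (Phi w1 w2 p).natDegree) :
    p ≠ 0 := by
  intro h0
  rw [h0, map_zero, Polynomial.natDegree_zero] at h
  omega

lemma Phi_aeval (w1 w2 : ℕ) (f : Polynomial ℂ) (P : M2) :
    Phi w1 w2 (Polynomial.aeval P f)
      = (f.map (algebraMap ℂ M2)).comp (Phi w1 w2 P) := by
  rw [Polynomial.comp_eq_aeval, Polynomial.aeval_map_algebraMap,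
    Polynomial.aeval_algHom_apply]

lemma natDegree_Phi_aeval (w1 w2 : ℕ) (f : Polynomial ℂ) (P : M2) :
    (Phi w1 w2 (Polynomial.aeval P f)).natDegree
      = f.natDegree * (Phi w1 w2 P).natDegree := by
  rw [Phi_aeval, Polynomial.natDegree_comp,
    Polynomial.natDegree_map_eq_of_injective (algebraMap ℂ M2).injective]

lemma fin2_degree (d : Fin 2 →₀ ℕ) : d.degree = d 0 + d 1 := by
  rw [Finsupp.degree_apply, Finset.sum_subset (Finset.subset_univ d.support)
    (fun i _ hi => Finsupp.notMem_support_iff.mp hi), Fin.sum_univ_two]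

lemma fin2_sum_le {p : M2} {d : Fin 2 →₀ ℕ} (h : p.totalDegree ≤ 1) (hd : d ∈ p.support) :
    d 0 + d 1 ≤ 1 := by
  have := MvPolynomial.le_totalDegree hd
  have h2 : (d.sum fun _ e => e) = d 0 + d 1 := by
    rw [Finsupp.sum, Finset.sum_subset (Finset.subset_univ d.support)
      (fun i _ hi => Finsupp.notMem_support_iff.mp hi), Fin.sum_univ_two]
  omega

lemma isHomog_coeff_Phi {w1 w2 k : ℕ} (hk : 1 ≤ k) {p : M2} (hp : p.totalDegree ≤ 1) :
    IsHomogeneous ((Phi w1 w2 p).coeff k) 1 := by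
  intro d hd
  rw [show (1 : Fin 2 → ℕ) = fun _ => 1 from rfl, ← Finsupp.degree_eq_weight_one, fin2_degree]
  obtain ⟨h1, h2⟩ := support_coeff_Phi hd
  have h3 := fin2_sum_le hp h2
  have h4 : ¬(d 0 = 0 ∧ d 1 = 0) := by
    rintro ⟨e0, e1⟩; rw [e0, e1] at h1; simp at h1; omega
  omega

lemma fin2_cases {d : Fin 2 →₀ ℕ} (h : d 0 + d 1 ≤ 1) :
    d = 0 ∨ d = Finsupp.single 0 1 ∨ d = Finsupp.single 1 1 := by
  by_cases h0 : d 0 = 0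
  · by_cases h1 : d 1 = 0
    · left; ext i; fin_cases i <;> simp [h0, h1]
    · right; right
      have : d 1 = 1 := by omega
      ext i; fin_cases i <;> simp [h0, this, Finsupp.single_apply]
  · right; left
    have h1 : d 1 = 0 := by omega
    have : d 0 = 1 := by omega
    ext i; fin_cases i <;> simp [h1, this, Finsupp.single_apply]

lemma affine_decomp {p : M2} (h : p.totalDegree ≤ 1) :
    p = C (coeff (Finsupp.single 0 1) p) * X 0 + C (coeff (Finsupp.single 1 1) p) * X 1
      + C (coeff 0 p) := by
  apply MvPolynomial.ext
  intro d
  rw [coeff_add, coeff_add, coeff_C_mul, coeff_C_mul, coeff_C, coeff_X', coeff_X']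
  by_cases h0 : d = 0
  · subst h0
    have e1 : ¬ (Finsupp.single 0 1 : Fin 2 →₀ ℕ) = 0 := by
      simp [Finsupp.single_eq_zero]
    have e2 : ¬ (Finsupp.single 1 1 : Fin 2 →₀ ℕ) = 0 := by
      simp [Finsupp.single_eq_zero]
    simp [e1, e2]
  · by_cases h1 : d = Finsupp.single 0 1
    · subst h1
      have e2 : ¬ (Finsupp.single 1 1 : Fin 2 →₀ ℕ) = Finsupp.single 0 1 := by
        intro hh
        have := DFunLike.congr_fun hh 0
        simp [Finsupp.single_apply] at this
      simp [e2, Ne.symm h0]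
    · by_cases h2 : d = Finsupp.single 1 1
      · subst h2
        have e1 : ¬ (Finsupp.single 0 1 : Fin 2 →₀ ℕ) = Finsupp.single 1 1 := by
          intro hh
          have := DFunLike.congr_fun hh 0
          simp [Finsupp.single_apply] at this
        simp [e1, Ne.symm h0]
      · have hd : coeff d p = 0 := by
          rw [← MvPolynomial.notMem_support_iff]
          intro hmem
          have h3 : d 0 + d 1 ≤ 1 := fin2_sum_le h hmem
          rcases fin2_cases h3 with h | h | h <;> simp_all
        rw [if_neg (fun hh => h1 hh.symm), if_neg (fun hh => h2 hh.symm),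
          if_neg (Ne.symm h0), hd]
        simp

lemma aeval_fix {σ : M2 →ₐ[ℂ] M2}
    {L : PolyMap} (hf1 : σ L.1 = L.1) (hf2 : σ L.2 = L.2)
    (g : M2) :
    σ (aeval ![L.1, L.2] g) = aeval ![L.1, L.2] g := by
  have hcomp := MvPolynomial.comp_aeval (φ := σ) (f := ![L.1, L.2])
  have h := AlgHom.congr_fun hcomp g
  rw [AlgHom.comp_apply] at h
  have hfun : (fun i => σ (![L.1, L.2] i)) = ![L.1, L.2] := by
    funext i
    fin_cases i
    · simpa using hf1
    · simpa using hf2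
  rw [h, hfun]

lemma exists_X0_coeff {L : PolyMap} (hL : IsPolyAut L) (h1 : L.1.totalDegree ≤ 1)
    (h2 : L.2.totalDegree ≤ 1) :
    coeff (Finsupp.single 0 1) L.1 ≠ 0 ∨ coeff (Finsupp.single 0 1) L.2 ≠ 0 := by
  by_contra hcon
  push_neg at hcon
  obtain ⟨ha1, ha2⟩ := hcon
  obtain ⟨G, _, hG2⟩ := hL
  have hX : aeval ![L.1, L.2] G.1 = (X 0 : M2) :=
    congrArg Prod.fst hG2
  set σ : M2 →ₐ[ℂ] M2 := aeval ![0, X 1] with hσ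
  have hfix : ∀ p : M2, p.totalDegree ≤ 1 →
      coeff (Finsupp.single 0 1) p = 0 → σ p = p := by
    intro p hp hc
    conv_lhs => rw [affine_decomp hp]
    conv_rhs => rw [affine_decomp hp]
    rw [hc]
    simp [hσ]
  have := aeval_fix (hfix L.1 h1 ha1) (hfix L.2 h2 ha2) G.1
  rw [hX] at this
  simp [hσ] at this
  exact MvPolynomial.X_ne_zero 0 this.symm

lemma exists_X1_coeff {L : PolyMap} (hL : IsPolyAut L) (h1 : L.1.totalDegree ≤ 1)
    (h2 : L.2.totalDegree ≤ 1) :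
    coeff (Finsupp.single 1 1) L.1 ≠ 0 ∨ coeff (Finsupp.single 1 1) L.2 ≠ 0 := by
  by_contra hcon
  push_neg at hcon
  obtain ⟨ha1, ha2⟩ := hcon
  obtain ⟨G, _, hG2⟩ := hL
  have hX : aeval ![L.1, L.2] G.2 = (X 1 : M2) :=
    congrArg Prod.snd hG2
  set σ : M2 →ₐ[ℂ] M2 := aeval ![X 0, 0] with hσ
  have hfix : ∀ p : M2, p.totalDegree ≤ 1 →
      coeff (Finsupp.single 1 1) p = 0 → σ p = p := by
    intro p hp hc
    conv_lhs => rw [affine_decomp hp]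
    conv_rhs => rw [affine_decomp hp]
    rw [hc]
    simp [hσ]
  have := aeval_fix (hfix L.1 h1 ha1) (hfix L.2 h2 ha2) G.2
  rw [hX] at this
  simp [hσ] at this
  exact MvPolynomial.X_ne_zero 1 this.symm

lemma pcomp_lowerT (g : Polynomial ℂ) (G : PolyMap) :
    pcomp (lowerT g) G = (G.1, G.2 + Polynomial.aeval G.1 g) := by
  unfold pcomp lowerT
  refine Prod.ext ?_ ?_ <;> simp only [map_add, aeval_X, Matrix.cons_val_zero,
    Matrix.cons_val_one, Matrix.head_cons]
  rw [← Polynomial.aeval_algHom_apply (aeval ![G.1, G.2]) (X 0) g, aeval_X,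
    Matrix.cons_val_zero]

lemma pcomp_upperT (g : Polynomial ℂ) (G : PolyMap) :
    pcomp (upperT g) G = (G.1 + Polynomial.aeval G.2 g, G.2) := by
  unfold pcomp upperT
  refine Prod.ext ?_ ?_ <;> simp only [map_add, aeval_X, Matrix.cons_val_zero,
    Matrix.cons_val_one, Matrix.head_cons]
  rw [← Polynomial.aeval_algHom_apply (aeval ![G.1, G.2]) (X 1) g, aeval_X,
    Matrix.cons_val_one, Matrix.cons_val_zero]

lemma chain_succ_even {L1 : PolyMap} {f : ℕ → Polynomial ℂ} {i : ℕ} (h : i % 2 = 0) :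
    chain L1 f (i+1)
      = ((chain L1 f i).1, (chain L1 f i).2 + Polynomial.aeval (chain L1 f i).1 (f (i+1))) := by
  rw [chain, if_pos h, pcomp_lowerT]

lemma chain_succ_odd {L1 : PolyMap} {f : ℕ → Polynomial ℂ} {i : ℕ} (h : i % 2 = 1) :
    chain L1 f (i+1)
      = ((chain L1 f i).1 + Polynomial.aeval (chain L1 f i).2 (f (i+1)), (chain L1 f i).2) := by
  rw [chain, if_neg (by omega), pcomp_upperT]

lemma base_case {w1 w2 : ℕ} {P0 Q0 : M2} {f1 : Polynomial ℂ}
    (hP0 : P0.totalDegree ≤ 1) (hQ0 : Q0 ≠ 0) (hQ0d : Q0.totalDegree ≤ 1)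
    (hu0 : 1 ≤ (Phi w1 w2 P0).natDegree) (hd1 : 2 ≤ f1.natDegree) :
    f1.natDegree * (Phi w1 w2 P0).natDegree
        ≤ (Phi w1 w2 (Q0 + Polynomial.aeval P0 f1)).natDegree
      ∧ (Phi w1 w2 Q0).natDegree ≤ (Phi w1 w2 (Q0 + Polynomial.aeval P0 f1)).natDegree := by
  set u0 := (Phi w1 w2 P0).natDegree with hu
  set v0 := (Phi w1 w2 Q0).natDegree with hv
  have hK : (Phi w1 w2 (Polynomial.aeval P0 f1)).natDegree = f1.natDegree * u0 :=
    natDegree_Phi_aeval w1 w2 f1 P0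
  rw [map_add]
  rcases lt_trichotomy v0 (f1.natDegree * u0) with hlt | heq | hgt
  · rw [Polynomial.natDegree_add_eq_right_of_natDegree_lt (by rw [hK]; exact hlt), hK]
    exact ⟨le_refl _, le_of_lt hlt⟩
  · -- tie case
    have hQ0ne : Phi w1 w2 Q0 ≠ 0 := Phi_ne_zero hQ0
    have hA : (Phi w1 w2 Q0).coeff v0 ≠ 0 := by
      rw [hv]
      exact Polynomial.leadingCoeff_ne_zero.mpr hQ0ne
    have hB : IsHomogeneous ((Phi w1 w2 (Polynomial.aeval P0 f1)).coeff v0) f1.natDegree := by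
      have hcoeff : (Phi w1 w2 (Polynomial.aeval P0 f1)).coeff v0
          = (Phi w1 w2 (Polynomial.aeval P0 f1)).leadingCoeff := by
        rw [Polynomial.leadingCoeff, hK, ← heq]
      rw [hcoeff, Phi_aeval]
      rw [Polynomial.leadingCoeff_comp ?hne]
      case hne => omega
      rw [Polynomial.leadingCoeff_map_of_injective (algebraMap ℂ M2).injective,
        Polynomial.natDegree_map_eq_of_injective (algebraMap ℂ M2).injective]
      have hlc : IsHomogeneous ((Phi w1 w2 P0).coeff (Phi w1 w2 P0).natDegree) 1 :=
        isHomog_coeff_Phi hu0 hP0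
      have h2 := (hlc.pow f1.natDegree).C_mul f1.leadingCoeff
      rw [MvPolynomial.algebraMap_eq]
      simpa using h2
    have hsum : (Phi w1 w2 Q0).coeff v0 + (Phi w1 w2 (Polynomial.aeval P0 f1)).coeff v0 ≠ 0 := by
      obtain ⟨d, hd⟩ := MvPolynomial.ne_zero_iff.mp hA
      intro hzero
      have hd2 := support_coeff_Phi hd
      have hdeg : d 0 + d 1 ≤ 1 := fin2_sum_le hQ0d hd2.2
      have hBd : MvPolynomial.coeff d ((Phi w1 w2 (Polynomial.aeval P0 f1)).coeff v0) = 0 := by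
        apply hB.coeff_eq_zero
        rw [fin2_degree]
        omega
      have hcd := congrArg (MvPolynomial.coeff d) hzero
      rw [MvPolynomial.coeff_add, hBd, add_zero, MvPolynomial.coeff_zero] at hcd
      exact hd hcd
    have hge : v0 ≤ (Phi w1 w2 Q0 + Phi w1 w2 (Polynomial.aeval P0 f1)).natDegree := by
      apply Polynomial.le_natDegree_of_ne_zero
      rw [Polynomial.coeff_add]
      exact hsum
    exact ⟨heq ▸ hge, hge⟩
  · rw [Polynomial.natDegree_add_eq_left_of_natDegree_lt (by rw [hK]; exact hgt)]
    exact ⟨le_of_lt hgt, le_refl _⟩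

lemma Phi_C (w1 w2 : ℕ) (a : ℂ) : Phi w1 w2 (C a) = Polynomial.C (C a) := by
  rw [← MvPolynomial.algebraMap_eq, AlgHom.commutes, Polynomial.algebraMap_apply,
    MvPolynomial.algebraMap_eq]

lemma comb_coeff (w1 w2 : ℕ) (a b c : ℂ) (P Q : M2) (k : ℕ) :
    (Phi w1 w2 (C a * P + C b * Q + C c)).coeff k
      = C a * (Phi w1 w2 P).coeff k + C b * (Phi w1 w2 Q).coeff k
        + (if k = 0 then C c else 0) := by
  rw [map_add, map_add, map_mul, map_mul, Phi_C, Phi_C, Phi_C,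
    Polynomial.coeff_add, Polynomial.coeff_add, Polynomial.coeff_C_mul,
    Polynomial.coeff_C_mul, Polynomial.coeff_C]

lemma comb_ge_left {w1 w2 : ℕ} {a b c : ℂ} {P Q : M2} (ha : a ≠ 0)
    (hW : 1 ≤ (Phi w1 w2 P).natDegree) (hP : P ≠ 0)
    (hside : b = 0 ∨ (Phi w1 w2 Q).natDegree < (Phi w1 w2 P).natDegree) :
    (Phi w1 w2 P).natDegree ≤ (Phi w1 w2 (C a * P + C b * Q + C c)).natDegree := by
  apply Polynomial.le_natDegree_of_ne_zero
  rw [comb_coeff, if_neg (by omega)]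
  have h2 : C b * (Phi w1 w2 Q).coeff (Phi w1 w2 P).natDegree = 0 := by
    rcases hside with h | h
    · rw [h]; simp
    · rw [Polynomial.coeff_eq_zero_of_natDegree_lt h, mul_zero]
  rw [h2, add_zero, add_zero]
  exact mul_ne_zero (fun hc => ha (by simpa using hc))
    (Polynomial.leadingCoeff_ne_zero.mpr (Phi_ne_zero hP))

lemma comb_ge_right {w1 w2 : ℕ} {a b c : ℂ} {P Q : M2} (hb : b ≠ 0)
    (hV : 1 ≤ (Phi w1 w2 Q).natDegree) (hQ : Q ≠ 0)
    (hside : a = 0 ∨ (Phi w1 w2 P).natDegree < (Phi w1 w2 Q).natDegree) :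
    (Phi w1 w2 Q).natDegree ≤ (Phi w1 w2 (C a * P + C b * Q + C c)).natDegree := by
  apply Polynomial.le_natDegree_of_ne_zero
  rw [comb_coeff, if_neg (by omega)]
  have h2 : C a * (Phi w1 w2 P).coeff (Phi w1 w2 Q).natDegree = 0 := by
    rcases hside with h | h
    · rw [h]; simp
    · rw [Polynomial.coeff_eq_zero_of_natDegree_lt h, mul_zero]
  rw [h2, zero_add, add_zero]
  exact mul_ne_zero (fun hc => hb (by simpa using hc))
    (Polynomial.leadingCoeff_ne_zero.mpr (Phi_ne_zero hQ))

lemma wdeg_ge_coeff {w1 w2 : ℕ} {p : M2} {β : Fin 2 →₀ ℕ} (h : coeff β p ≠ 0) :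
    β 0 * w1 + β 1 * w2 ≤ wdeg w1 w2 p :=
  Finset.le_sup (f := fun α : Fin 2 →₀ ℕ => α 0 * w1 + α 1 * w2)
    (mem_support_iff.mpr h)

lemma one_le_wdeg {w1 w2 : ℕ} (hw1 : 0 < w1) (hw2 : 0 < w2) {p : M2}
    (h : p.totalDegree = 1) : 1 ≤ wdeg w1 w2 p := by
  have hp : p ≠ 0 := by
    intro h0
    rw [h0] at h
    simp at h
  obtain ⟨β, hβ, hβ2⟩ := Finset.exists_mem_eq_sup p.support
    (MvPolynomial.support_nonempty.mpr hp) (fun s : Fin 2 →₀ ℕ => s.sum fun _ e => e)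
  have hsum : (β.sum fun _ e => e) = β 0 + β 1 := by
    rw [Finsupp.sum, Finset.sum_subset (Finset.subset_univ β.support)
      (fun i _ hi => Finsupp.notMem_support_iff.mp hi), Fin.sum_univ_two]
  have h1 : β 0 + β 1 = 1 := by
    rw [← hsum, ← hβ2]
    exact h ▸ rfl
  have h2 := wdeg_ge_coeff (w1 := w1) (w2 := w2) (mem_support_iff.mp hβ)
  have : β 0 = 0 ∨ β 0 = 1 := by omega
  rcases this with h3 | h3 <;>
  · have h4 : β 1 = 1 - β 0 := by omega
    nlinarith [h2]

lemma wdeg_ge_w1 {w1 w2 : ℕ} {p : M2} (h : coeff (Finsupp.single 0 1) p ≠ 0) :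
    w1 ≤ wdeg w1 w2 p := by
  have := wdeg_ge_coeff (w1 := w1) (w2 := w2) h
  simpa [Finsupp.single_apply] using this

lemma wdeg_ge_w2 {w1 w2 : ℕ} {p : M2} (h : coeff (Finsupp.single 1 1) p ≠ 0) :
    w2 ≤ wdeg w1 w2 p := by
  have := wdeg_ge_coeff (w1 := w1) (w2 := w2) h
  simpa [Finsupp.single_apply] using this

lemma affine_nonconst {p : M2} (h : p.totalDegree = 1) :
    coeff (Finsupp.single 0 1) p ≠ 0 ∨ coeff (Finsupp.single 1 1) p ≠ 0 := by
  by_contra hcon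
  push_neg at hcon
  obtain ⟨h1, h2⟩ := hcon
  have hd := affine_decomp h.le
  rw [h1, h2] at hd
  simp only [map_zero, zero_mul, zero_add] at hd
  rw [hd] at h
  simp at h

lemma aeval_affine (P Q : M2) (a b c : ℂ) :
    aeval ![P, Q] (C a * X 0 + C b * X 1 + C c) = C a * P + C b * Q + C c := by
  simp [MvPolynomial.algebraMap_eq]

/-- If `F` is an automorphism of ℂ² of length at least 2, then
`wdeg F1 + wdeg F2 > w1 + w2`. -/
theorem stmt_12 (w1 w2 : ℕ) (hw1 : 0 < w1) (hw2 : 0 < w2) (F : PolyMap) (hAut : IsPolyAut F)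
    (l : ℕ) (hl : 2 ≤ l) (L1 L2 : PolyMap) (hL1 : IsAffineAut L1) (hL2 : IsAffineAut L2)
    (f : ℕ → Polynomial ℂ) (hf : ∀ i, 1 ≤ i → i ≤ l → 1 < (f i).natDegree)
    (hF : F = pcomp L2 (chain L1 f l)) :
    w1 + w2 < wdeg w1 w2 F.1 + wdeg w1 w2 F.2 := by
  obtain ⟨hL1aut, hL11, hL12⟩ := hL1
  obtain ⟨hL2aut, hL21, hL22⟩ := hL2
  have hu0 : 1 ≤ (Phi w1 w2 L1.1).natDegree := by
    rw [← wdeg_eq]; exact one_le_wdeg hw1 hw2 hL11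
  have hv0 : 1 ≤ (Phi w1 w2 L1.2).natDegree := by
    rw [← wdeg_eq]; exact one_le_wdeg hw1 hw2 hL12
  have hx : w1 ≤ (Phi w1 w2 L1.1).natDegree ∨ w1 ≤ (Phi w1 w2 L1.2).natDegree := by
    rcases exists_X0_coeff hL1aut hL11.le hL12.le with h | h
    · left; rw [← wdeg_eq]; exact wdeg_ge_w1 h
    · right; rw [← wdeg_eq]; exact wdeg_ge_w1 h
  have hy : w2 ≤ (Phi w1 w2 L1.1).natDegree ∨ w2 ≤ (Phi w1 w2 L1.2).natDegree := by
    rcases exists_X1_coeff hL1aut hL11.le hL12.le with h | h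
    · left; rw [← wdeg_eq]; exact wdeg_ge_w2 h
    · right; rw [← wdeg_eq]; exact wdeg_ge_w2 h
  have hQ0ne : L1.2 ≠ 0 := by
    intro h; rw [h] at hL12; simp at hL12
  have main : ∀ n, 1 ≤ n → n ≤ l →
      (n % 2 = 1 →
        w1 ≤ (Phi w1 w2 (chain L1 f n).2).natDegree ∧
        w2 ≤ (Phi w1 w2 (chain L1 f n).2).natDegree ∧
        2 * (Phi w1 w2 (chain L1 f n).1).natDegree
          ≤ (Phi w1 w2 (chain L1 f n).2).natDegree ∧
        1 ≤ (Phi w1 w2 (chain L1 f n).1).natDegree ∧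
        (2 ≤ n → w1 ≤ (Phi w1 w2 (chain L1 f n).1).natDegree ∧
                 w2 ≤ (Phi w1 w2 (chain L1 f n).1).natDegree)) ∧
      (n % 2 = 0 →
        w1 ≤ (Phi w1 w2 (chain L1 f n).2).natDegree ∧
        w2 ≤ (Phi w1 w2 (chain L1 f n).2).natDegree ∧
        2 * (Phi w1 w2 (chain L1 f n).2).natDegree
          ≤ (Phi w1 w2 (chain L1 f n).1).natDegree) := by
    intro n
    induction n with
    | zero => intro h; omega
    | succ m ih =>
      intro _ hle
      rcases Nat.eq_zero_or_pos m with hm0 | hm1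
      · subst hm0
        have hd1 : 2 ≤ (f 1).natDegree := by
          have := hf 1 le_rfl (by omega); omega
        have hc1 := chain_succ_even (L1 := L1) (f := f) (i := 0) rfl
        have hb := base_case (w1 := w1) (w2 := w2) hL11.le hQ0ne hL12.le hu0 hd1
        have h2u : 2 * (Phi w1 w2 L1.1).natDegree
            ≤ (f 1).natDegree * (Phi w1 w2 L1.1).natDegree :=
          Nat.mul_le_mul_right _ hd1
        have hch0 : chain L1 f 0 = L1 := rfl
        rw [hch0] at hc1
        constructor
        · intro _
          simp only [Nat.zero_add] at hc1 ⊢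
          simp only [hc1]
          refine ⟨?_, ?_, ?_, ?_, ?_⟩
          · rcases hx with h | h <;> omega
          · rcases hy with h | h <;> omega
          · omega
          · exact hu0
          · intro h; omega
        · intro h; omega
      · have hmle : m ≤ l := by omega
        have ihm := ih (by omega) hmle
        have hdm : 2 ≤ (f (m+1)).natDegree := by
          have := hf (m+1) (by omega) hle; omega
        rcases Nat.mod_two_eq_zero_or_one m with hm | hm
        · -- m even: step is lowerT, updates the second component
          obtain ⟨e1, e2, e3⟩ := ihm.2 hm
          have hstep := chain_succ_even (L1 := L1) (f := f) (i := m) hm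
          have hK : (Phi w1 w2 (Polynomial.aeval (chain L1 f m).1 (f (m+1)))).natDegree
              = (f (m+1)).natDegree * (Phi w1 w2 (chain L1 f m).1).natDegree :=
            natDegree_Phi_aeval _ _ _ _
          have h2W : 2 * (Phi w1 w2 (chain L1 f m).1).natDegree
              ≤ (f (m+1)).natDegree * (Phi w1 w2 (chain L1 f m).1).natDegree :=
            Nat.mul_le_mul_right _ hdm
          have hV1 : (Phi w1 w2 (chain L1 f (m+1)).2).natDegree
              = (f (m+1)).natDegree * (Phi w1 w2 (chain L1 f m).1).natDegree := by
            rw [hstep]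
            show (Phi w1 w2 ((chain L1 f m).2
              + Polynomial.aeval (chain L1 f m).1 (f (m+1)))).natDegree = _
            rw [map_add, Polynomial.natDegree_add_eq_right_of_natDegree_lt
              (by rw [hK]; omega), hK]
          have hW1 : (Phi w1 w2 (chain L1 f (m+1)).1).natDegree
              = (Phi w1 w2 (chain L1 f m).1).natDegree := by
            rw [hstep]
          constructor
          · intro _
            rw [hV1, hW1]
            refine ⟨by omega, by omega, by omega, by omega, ?_⟩
            intro _
            exact ⟨by omega, by omega⟩
          · intro hcon
            omega
        · -- m odd: step is upperT, updates the first component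
          obtain ⟨e1, e2, e3, e4, _⟩ := ihm.1 hm
          have hstep := chain_succ_odd (L1 := L1) (f := f) (i := m) hm
          have hK : (Phi w1 w2 (Polynomial.aeval (chain L1 f m).2 (f (m+1)))).natDegree
              = (f (m+1)).natDegree * (Phi w1 w2 (chain L1 f m).2).natDegree :=
            natDegree_Phi_aeval _ _ _ _
          have h2V : 2 * (Phi w1 w2 (chain L1 f m).2).natDegree
              ≤ (f (m+1)).natDegree * (Phi w1 w2 (chain L1 f m).2).natDegree :=
            Nat.mul_le_mul_right _ hdm
          have hW1 : (Phi w1 w2 (chain L1 f (m+1)).1).natDegree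
              = (f (m+1)).natDegree * (Phi w1 w2 (chain L1 f m).2).natDegree := by
            rw [hstep]
            show (Phi w1 w2 ((chain L1 f m).1
              + Polynomial.aeval (chain L1 f m).2 (f (m+1)))).natDegree = _
            rw [map_add, Polynomial.natDegree_add_eq_right_of_natDegree_lt
              (by rw [hK]; omega), hK]
          have hV1 : (Phi w1 w2 (chain L1 f (m+1)).2).natDegree
              = (Phi w1 w2 (chain L1 f m).2).natDegree := by
            rw [hstep]
          constructor
          · intro hcon
            omega
          · intro _
            rw [hV1, hW1]
            exact ⟨by omega, by omega, by omega⟩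
  -- final assembly
  have hfin := main l (by omega) le_rfl
  have hdec1 := affine_decomp (le_of_eq hL21)
  have hdec2 := affine_decomp (le_of_eq hL22)
  have hF1 : F.1 = C (coeff (Finsupp.single 0 1) L2.1) * (chain L1 f l).1
      + C (coeff (Finsupp.single 1 1) L2.1) * (chain L1 f l).2 + C (coeff 0 L2.1) := by
    rw [hF]
    show aeval ![(chain L1 f l).1, (chain L1 f l).2] L2.1 = _
    conv_lhs => rw [hdec1]
    exact aeval_affine _ _ _ _ _
  have hF2 : F.2 = C (coeff (Finsupp.single 0 1) L2.2) * (chain L1 f l).1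
      + C (coeff (Finsupp.single 1 1) L2.2) * (chain L1 f l).2 + C (coeff 0 L2.2) := by
    rw [hF]
    show aeval ![(chain L1 f l).1, (chain L1 f l).2] L2.2 = _
    conv_lhs => rw [hdec2]
    exact aeval_affine _ _ _ _ _
  rcases Nat.mod_two_eq_zero_or_one l with hpar | hpar
  · -- l even : first component of the chain is the big one
    obtain ⟨e1, e2, e3⟩ := hfin.2 hpar
    have hVpos : 1 ≤ (Phi w1 w2 (chain L1 f l).2).natDegree := by omega
    have hWpos : 1 ≤ (Phi w1 w2 (chain L1 f l).1).natDegree := by omega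
    have hVW : (Phi w1 w2 (chain L1 f l).2).natDegree
        < (Phi w1 w2 (chain L1 f l).1).natDegree := by omega
    have hPl : (chain L1 f l).1 ≠ 0 := ne_zero_of_one_le_ND hWpos
    have hQl : (chain L1 f l).2 ≠ 0 := ne_zero_of_one_le_ND hVpos
    rcases exists_X0_coeff hL2aut (le_of_eq hL21) (le_of_eq hL22) with ha | ha
    · have hbig : (Phi w1 w2 (chain L1 f l).1).natDegree ≤ wdeg w1 w2 F.1 := by
        rw [wdeg_eq, hF1]
        exact comb_ge_left ha hWpos hPl (Or.inr hVW)
      have hsmall : (Phi w1 w2 (chain L1 f l).2).natDegree ≤ wdeg w1 w2 F.2 := by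
        rw [wdeg_eq, hF2]
        by_cases ha2 : coeff (Finsupp.single 0 1) L2.2 = 0
        · have hb2 : coeff (Finsupp.single 1 1) L2.2 ≠ 0 :=
            (affine_nonconst hL22).resolve_left (fun h => h ha2)
          exact comb_ge_right hb2 hVpos hQl (Or.inl ha2)
        · exact le_trans (le_of_lt hVW) (comb_ge_left ha2 hWpos hPl (Or.inr hVW))
      omega
    · have hbig : (Phi w1 w2 (chain L1 f l).1).natDegree ≤ wdeg w1 w2 F.2 := by
        rw [wdeg_eq, hF2]
        exact comb_ge_left ha hWpos hPl (Or.inr hVW)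
      have hsmall : (Phi w1 w2 (chain L1 f l).2).natDegree ≤ wdeg w1 w2 F.1 := by
        rw [wdeg_eq, hF1]
        by_cases ha2 : coeff (Finsupp.single 0 1) L2.1 = 0
        · have hb2 : coeff (Finsupp.single 1 1) L2.1 ≠ 0 :=
            (affine_nonconst hL21).resolve_left (fun h => h ha2)
          exact comb_ge_right hb2 hVpos hQl (Or.inl ha2)
        · exact le_trans (le_of_lt hVW) (comb_ge_left ha2 hWpos hPl (Or.inr hVW))
      omega
  · -- l odd : second component of the chain is the big one
    obtain ⟨e1, e2, e3, e4, e5⟩ := hfin.1 hpar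
    obtain ⟨e6, e7⟩ := e5 hl
    have hWpos : 1 ≤ (Phi w1 w2 (chain L1 f l).1).natDegree := e4
    have hVpos : 1 ≤ (Phi w1 w2 (chain L1 f l).2).natDegree := by omega
    have hWV : (Phi w1 w2 (chain L1 f l).1).natDegree
        < (Phi w1 w2 (chain L1 f l).2).natDegree := by omega
    have hPl : (chain L1 f l).1 ≠ 0 := ne_zero_of_one_le_ND hWpos
    have hQl : (chain L1 f l).2 ≠ 0 := ne_zero_of_one_le_ND hVpos
    rcases exists_X1_coeff hL2aut (le_of_eq hL21) (le_of_eq hL22) with hb | hb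
    · have hbig : (Phi w1 w2 (chain L1 f l).2).natDegree ≤ wdeg w1 w2 F.1 := by
        rw [wdeg_eq, hF1]
        exact comb_ge_right hb hVpos hQl (Or.inr hWV)
      have hsmall : (Phi w1 w2 (chain L1 f l).1).natDegree ≤ wdeg w1 w2 F.2 := by
        rw [wdeg_eq, hF2]
        by_cases hb2 : coeff (Finsupp.single 1 1) L2.2 = 0
        · have ha2 : coeff (Finsupp.single 0 1) L2.2 ≠ 0 :=
            (affine_nonconst hL22).resolve_right (fun h => h hb2)
          exact comb_ge_left ha2 hWpos hPl (Or.inl hb2)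
        · exact le_trans (le_of_lt hWV) (comb_ge_right hb2 hVpos hQl (Or.inr hWV))
      omega
    · have hbig : (Phi w1 w2 (chain L1 f l).2).natDegree ≤ wdeg w1 w2 F.2 := by
        rw [wdeg_eq, hF2]
        exact comb_ge_right hb hVpos hQl (Or.inr hWV)
      have hsmall : (Phi w1 w2 (chain L1 f l).1).natDegree ≤ wdeg w1 w2 F.1 := by
        rw [wdeg_eq, hF1]
        by_cases hb2 : coeff (Finsupp.single 1 1) L2.1 = 0
        · have ha2 : coeff (Finsupp.single 0 1) L2.1 ≠ 0 :=
            (affine_nonconst hL21).resolve_right (fun h => h hb2)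
          exact comb_ge_left ha2 hWpos hPl (Or.inl hb2)
        · exact le_trans (le_of_lt hWV) (comb_ge_right hb2 hVpos hQl (Or.inr hWV))
      omega
end
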